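/- Let a₁ ≥ 3 and S = ⟨a₁, 2a₁+1, 2a₁+2, ..., 2a₁+(a₁-2)⟩. Then the Frobenius number of S is 4a₁ - 1. -/

import Mathlib

private lemma key_inv (a₁ : ℕ) (h : 3 ≤ a₁) {n : ℕ}
    (hn : n ∈ AddSubmonoid.closure
      ({a₁} ∪ {x : ℕ | ∃ i : ℕ, 1 ≤ i ∧ i ≤ a₁ - 2 ∧ x = 2 * a₁ + i})) :
    (n % a₁ ≠ 0 → 2 * a₁ + n % a₁ ≤ n) ∧ (n % a₁ = a₁ - 1 → 5 * a₁ - 1 ≤ n) := by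
  induction hn using AddSubmonoid.closure_induction with
  | mem x hx =>
    rcases hx with hx | ⟨i, hi1, hi2, rfl⟩
    · simp at hx
      subst hx
      simp [Nat.mod_self]
      omega
    · have hmod : (2 * a₁ + i) % a₁ = i := by
        have he : 2 * a₁ + i = i + a₁ * 2 := by ring
        rw [he, Nat.add_mul_mod_self_left, Nat.mod_eq_of_lt (by omega)]
      rw [hmod]
      omega
  | zero => simp; omega
  | add m n hm hn ihm ihn =>
    have h1 := Nat.mod_lt m (show 0 < a₁ by omega)
    have h2 := Nat.mod_lt n (show 0 < a₁ by omega)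
    have h3 : (m + n) % a₁ = (m % a₁ + n % a₁) % a₁ := Nat.add_mod m n a₁
    have h4 : (m % a₁ + n % a₁) % a₁ = m % a₁ + n % a₁ ∨
        (m % a₁ + n % a₁) % a₁ = m % a₁ + n % a₁ - a₁ := by
      rcases Nat.lt_or_ge (m % a₁ + n % a₁) a₁ with hlt | hge
      · left; exact Nat.mod_eq_of_lt hlt
      · right
        rw [Nat.mod_eq_sub_mod hge, Nat.mod_eq_of_lt (by omega)]
    have h5 : m % a₁ ≤ m := Nat.mod_le m a₁
    have h6 : n % a₁ ≤ n := Nat.mod_le n a₁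
    omega

theorem stmt_11 (a₁ : ℕ) (h : 3 ≤ a₁) :
    IsGreatest
      {m : ℕ | m ∉ AddSubmonoid.closure
        ({a₁} ∪ {x : ℕ | ∃ i : ℕ, 1 ≤ i ∧ i ≤ a₁ - 2 ∧ x = 2 * a₁ + i})}
      (4 * a₁ - 1) := by
  set S := AddSubmonoid.closure
      ({a₁} ∪ {x : ℕ | ∃ i : ℕ, 1 ≤ i ∧ i ≤ a₁ - 2 ∧ x = 2 * a₁ + i}) with hS
  have ha : a₁ ∈ S := AddSubmonoid.subset_closure (Or.inl rfl)
  have hgen : ∀ i, 1 ≤ i → i ≤ a₁ - 2 → 2 * a₁ + i ∈ S := fun i h1 h2 =>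
    AddSubmonoid.subset_closure (Or.inr ⟨i, h1, h2, rfl⟩)
  have hmul : ∀ k : ℕ, k * a₁ ∈ S := by
    intro k
    have := AddSubmonoid.nsmul_mem S ha k
    simpa [smul_eq_mul] using this
  constructor
  · -- 4*a₁ - 1 ∉ S
    intro hmem
    have hk := key_inv a₁ h hmem
    have hmod : (4 * a₁ - 1) % a₁ = a₁ - 1 := by
      have he : 4 * a₁ - 1 = (a₁ - 1) + a₁ * 3 := by omega
      rw [he, Nat.add_mul_mod_self_left, Nat.mod_eq_of_lt (by omega)]
    omega
  · -- upper bound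
    intro m hm
    by_contra hlt
    push_neg at hlt
    have hm4 : 4 * a₁ ≤ m := by omega
    apply hm
    have hr : m % a₁ < a₁ := Nat.mod_lt m (by omega)
    have hdiv : m = a₁ * (m / a₁) + m % a₁ := (Nat.div_add_mod m a₁).symm
    have hcomm : a₁ * (m / a₁) = (m / a₁) * a₁ := mul_comm _ _
    rcases Nat.eq_zero_or_pos (m % a₁) with h0 | hpos
    · have : m = (m / a₁) * a₁ := by omega
      rw [this]; exact hmul _
    · rcases Nat.lt_or_ge (m % a₁) (a₁ - 1) with hsm | hbig
      · -- 1 ≤ r ≤ a₁ - 2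
        have hq2 : 2 ≤ m / a₁ := (Nat.le_div_iff_mul_le (by omega)).2 (by omega)
        have hrep : m = (2 * a₁ + m % a₁) + (m / a₁ - 2) * a₁ := by
          have e2 : (m / a₁ - 2) * a₁ = (m / a₁) * a₁ - 2 * a₁ := Nat.sub_mul _ _ _
          have e3 : 2 * a₁ ≤ (m / a₁) * a₁ := Nat.mul_le_mul_right _ hq2
          omega
        rw [hrep]
        exact S.add_mem (hgen _ hpos (by omega)) (hmul _)
      · -- r = a₁ - 1
        have hr1 : m % a₁ = a₁ - 1 := by omega
        have hq4 : 4 ≤ m / a₁ := (Nat.le_div_iff_mul_le (by omega)).2 (by omega)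
        have hrep : m = (2 * a₁ + 1) + ((2 * a₁ + (a₁ - 2)) + (m / a₁ - 4) * a₁) := by
          have e2 : (m / a₁ - 4) * a₁ = (m / a₁) * a₁ - 4 * a₁ := Nat.sub_mul _ _ _
          have e3 : 4 * a₁ ≤ (m / a₁) * a₁ := Nat.mul_le_mul_right _ hq4
          omega
        rw [hrep]
        exact S.add_mem (hgen 1 le_rfl (by omega))
          (S.add_mem (hgen (a₁ - 2) (by omega) le_rfl) (hmul _))
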